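/- The function g_0(p) = (1/q)·((1-2pq)/(q·(1 - ln(q)·√(2/p))))^(√(p/2)), with q = 1-p, has exactly one zero of g_0 - 1 on the interval (0, (3-√5)/2); this zero p* satisfies p* ≈ 0.1711. -/

import Mathlib

open Real Set

lemma log_taylor {x : ℝ} (h0 : 0 ≤ x) (h1 : x < 1) (n : ℕ) :
    -(∑ i ∈ Finset.range n, x ^ (i + 1) / (i + 1)) - x ^ (n + 1) / (1 - x) ≤ Real.log (1 - x) ∧
      Real.log (1 - x) ≤ -(∑ i ∈ Finset.range n, x ^ (i + 1) / (i + 1)) + x ^ (n + 1) / (1 - x) := by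
  have h := Real.abs_log_sub_add_sum_range_le (x := x) (by rwa [abs_of_nonneg h0]) n
  rw [abs_of_nonneg h0, abs_le] at h
  exact ⟨by linarith [h.1], by linarith [h.2]⟩

lemma lga : (-0.1870529 : ℝ) ≤ Real.log 0.8294 ∧ Real.log 0.8294 ≤ -0.1870525 := by
  have h := log_taylor (x := 0.1706) (by norm_num) (by norm_num) 8
  norm_num [Finset.sum_range_succ] at h
  constructor <;> linarith [h.1, h.2]

lemma lgb : (-0.1882593 : ℝ) ≤ Real.log 0.8284 ∧ Real.log 0.8284 ≤ -0.1882589 := by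
  have h := log_taylor (x := 0.1716) (by norm_num) (by norm_num) 8
  norm_num [Finset.sum_range_succ] at h
  constructor <;> linarith [h.1, h.2]

lemma lgNa : (-0.3326674 : ℝ) ≤ Real.log 0.71700872 ∧ Real.log 0.71700872 ≤ -0.3326672 := by
  have h := log_taylor (x := 0.28299128) (by norm_num) (by norm_num) 13
  norm_num [Finset.sum_range_succ] at h
  constructor <;> linarith [h.1, h.2]

lemma lgNb : (-0.3345039 : ℝ) ≤ Real.log 0.71569312 ∧ Real.log 0.71569312 ≤ -0.3345037 := by
  have h := log_taylor (x := 0.28430688) (by norm_num) (by norm_num) 13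
  norm_num [Finset.sum_range_succ] at h
  constructor <;> linarith [h.1, h.2]

lemma lgxa : (-0.1981742 : ℝ) ≤ Real.log 0.820227 := by
  have h := log_taylor (x := 0.179773) (by norm_num) (by norm_num) 9
  norm_num [Finset.sum_range_succ] at h
  linarith [h.1]

lemma lgxb : Real.log 0.82135375 ≤ -0.1968013 := by
  have h := log_taylor (x := 0.17864625) (by norm_num) (by norm_num) 9
  norm_num [Finset.sum_range_succ] at h
  linarith [h.2]

lemma sqrt2b : (1.4142135 : ℝ) ≤ Real.sqrt 2 ∧ Real.sqrt 2 ≤ 1.4142136 := by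
  constructor
  · exact (Real.le_sqrt' (by norm_num)).2 (by norm_num)
  · have := Real.sqrt_le_sqrt (show (2:ℝ) ≤ 1.4142136 ^ 2 by norm_num)
    rwa [Real.sqrt_sq (by norm_num)] at this

lemma sqrta : (0.4130375 : ℝ) ≤ Real.sqrt 0.1706 ∧ Real.sqrt 0.1706 ≤ 0.4130376 := by
  constructor
  · exact (Real.le_sqrt' (by norm_num)).2 (by norm_num)
  · have := Real.sqrt_le_sqrt (show (0.1706:ℝ) ≤ 0.4130376 ^ 2 by norm_num)
    rwa [Real.sqrt_sq (by norm_num)] at this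

lemma sqrtb : (0.4142463 : ℝ) ≤ Real.sqrt 0.1716 ∧ Real.sqrt 0.1716 ≤ 0.4142464 := by
  constructor
  · exact (Real.le_sqrt' (by norm_num)).2 (by norm_num)
  · have := Real.sqrt_le_sqrt (show (0.1716:ℝ) ≤ 0.4142464 ^ 2 by norm_num)
    rwa [Real.sqrt_sq (by norm_num)] at this

lemma sqrtI {p : ℝ} (h1 : 0.1706 ≤ p) (h2 : p ≤ 0.1716) :
    (0.413 : ℝ) ≤ Real.sqrt p ∧ Real.sqrt p ≤ 0.41425 := by
  constructor
  · exact (Real.le_sqrt' (by norm_num)).2 (by nlinarith)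
  · have := Real.sqrt_le_sqrt (show p ≤ (0.41425:ℝ) ^ 2 by nlinarith)
    rwa [Real.sqrt_sq (by norm_num)] at this

noncomputable def phiF : ℝ → ℝ := fun p =>
  -Real.log (1 - p) * (Real.sqrt 2 / Real.sqrt p) + Real.log (1 - 2 * p * (1 - p)) -
    Real.log ((1 - p) * (1 - Real.log (1 - p) * (Real.sqrt 2 / Real.sqrt p)))

noncomputable def EF : ℝ → ℝ := fun p =>
  (Real.sqrt 2 / ((1 - p) * Real.sqrt p)
    - Real.sqrt 2 * (-Real.log (1 - p)) / (2 * (p * Real.sqrt p)))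
  + (4 * p - 2) / (1 - 2 * p * (1 - p))
  - (-1 * (1 - Real.log (1 - p) * (Real.sqrt 2 / Real.sqrt p)) +
      (1 - p) * (Real.sqrt 2 / ((1 - p) * Real.sqrt p)
        - Real.sqrt 2 * (-Real.log (1 - p)) / (2 * (p * Real.sqrt p)))) /
    ((1 - p) * (1 - Real.log (1 - p) * (Real.sqrt 2 / Real.sqrt p)))

set_option maxHeartbeats 1000000 in
lemma hasDerivPhi {p : ℝ} (h1 : 0.17 < p) (h2 : p < 0.172) : HasDerivAt phiF (EF p) p := by
  have hp : 0 < p := by linarith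
  have hq : 0 < 1 - p := by linarith
  have hlneg : Real.log (1 - p) < 0 := Real.log_neg (by linarith) (by linarith)
  have hsp : 0 < Real.sqrt p := Real.sqrt_pos.2 hp
  have hs0 : Real.sqrt p ≠ 0 := hsp.ne'
  have hvpos : 0 < Real.sqrt 2 / Real.sqrt p := by positivity
  have hw : 0 < 1 - Real.log (1 - p) * (Real.sqrt 2 / Real.sqrt p) := by
    have := mul_pos (neg_pos.2 hlneg) hvpos
    nlinarith
  have hN : (0:ℝ) < 1 - 2 * p * (1 - p) := by nlinarith
  have Hs : HasDerivAt Real.sqrt (1 / (2 * Real.sqrt p)) p := Real.hasDerivAt_sqrt hp.ne'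
  have Hv : HasDerivAt (fun x => Real.sqrt 2 / Real.sqrt x)
      ((0 * Real.sqrt p - Real.sqrt 2 * (1 / (2 * Real.sqrt p))) / Real.sqrt p ^ 2) p :=
    (hasDerivAt_const p (Real.sqrt 2)).div Hs hs0
  rw [Real.sq_sqrt hp.le] at Hv
  have Hv' : HasDerivAt (fun x => Real.sqrt 2 / Real.sqrt x)
      (-(Real.sqrt 2 / (2 * (p * Real.sqrt p)))) p := by
    convert Hv using 1
    field_simp
    ring
  have H1m : HasDerivAt (fun x : ℝ => 1 - x) (-1) p := by
    simpa using (hasDerivAt_id p).const_sub 1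
  have Hlg : HasDerivAt (fun x : ℝ => Real.log (1 - x)) (-1 / (1 - p)) p :=
    H1m.log hq.ne'
  have Ht2 : HasDerivAt (fun x : ℝ => -Real.log (1 - x) * (Real.sqrt 2 / Real.sqrt x))
      (Real.sqrt 2 / ((1 - p) * Real.sqrt p)
        - Real.sqrt 2 * (-Real.log (1 - p)) / (2 * (p * Real.sqrt p))) p := by
    refine (Hlg.neg.mul Hv').congr_deriv ?_
    simp only [Pi.neg_apply]
    field_simp
    ring
  have H2x : HasDerivAt (fun x : ℝ => 2 * x) 2 p := by
    simpa using (hasDerivAt_id p).const_mul 2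
  have HN : HasDerivAt (fun x : ℝ => 1 - 2 * x * (1 - x))
      (-(2 * (1 - p) + 2 * p * (-1))) p := (H2x.mul H1m).const_sub 1
  have HlogN2 : HasDerivAt (fun x : ℝ => Real.log (1 - 2 * x * (1 - x)))
      ((4 * p - 2) / (1 - 2 * p * (1 - p))) p := by
    convert HN.log hN.ne' using 1
    ring
  have Hw2 : HasDerivAt (fun x : ℝ => 1 - Real.log (1 - x) * (Real.sqrt 2 / Real.sqrt x))
      (Real.sqrt 2 / ((1 - p) * Real.sqrt p)
        - Real.sqrt 2 * (-Real.log (1 - p)) / (2 * (p * Real.sqrt p))) p := by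
    refine ((Hlg.mul Hv').const_sub 1).congr_deriv ?_
    field_simp
    ring
  have HD2 := H1m.mul Hw2
  have HlogD2 := HD2.log (mul_pos hq hw).ne'
  exact (Ht2.add HlogN2).sub HlogD2

lemma div_aux {T w q : ℝ} (hw : w ≠ 0) (hq : q ≠ 0) :
    (-1 * w + q * T) / (q * w) = T / w - 1 / q := by
  field_simp
  ring



set_option maxHeartbeats 1000000 in
lemma EF_pos {p : ℝ} (h1 : 0.1706 ≤ p) (h2 : p ≤ 0.1716) : 0 < EF p := by
  have hp : 0 < p := by linarith
  have hq : 0 < 1 - p := by linarith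
  have hq1 : 0.8284 ≤ 1 - p := by linarith
  have hq2 : 1 - p ≤ 0.8294 := by linarith
  obtain ⟨hs1, hs2⟩ := sqrtI h1 h2
  obtain ⟨hr1, hr2⟩ := sqrt2b
  have hsp : 0 < Real.sqrt p := by linarith
  -- bounds for L = -log(1-p)
  have hLa : Real.log (1 - p) ≤ Real.log 0.8294 :=
    (Real.log_le_log_iff (by linarith) (by norm_num)).2 hq2
  have hLb : Real.log 0.8284 ≤ Real.log (1 - p) :=
    (Real.log_le_log_iff (by norm_num) (by linarith)).2 hq1
  have hL1 : (0.1870525 : ℝ) ≤ -Real.log (1 - p) := by linarith [lga.2]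
  have hL2 : -Real.log (1 - p) ≤ 0.1882593 := by linarith [lgb.1]
  set L := -Real.log (1 - p) with hLdef
  set s := Real.sqrt p with hsdef
  set r := Real.sqrt 2 with hrdef
  have hLpos : 0 < L := by linarith
  -- N bounds
  have hN1 : (0.7156 : ℝ) ≤ 1 - 2 * p * (1 - p) := by nlinarith [sq_nonneg (p - 0.1716)]
  have hNpos : (0 : ℝ) < 1 - 2 * p * (1 - p) := by linarith
  -- first term bounds
  have hrqs1 : (4.1156 : ℝ) ≤ r / ((1 - p) * s) := by
    rw [le_div_iff₀ (by positivity)]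
    have h : (1 - p) * s ≤ 0.8294 * 0.41425 :=
      mul_le_mul hq2 hs2 (by linarith) (by norm_num)
    nlinarith
  have hrqs2 : r / ((1 - p) * s) ≤ 4.1336 := by
    rw [div_le_iff₀ (by positivity)]
    have h : (0.8284 : ℝ) * 0.413 ≤ (1 - p) * s :=
      mul_le_mul hq1 hs1 (by norm_num) (by linarith)
    nlinarith
  have hps1 : (0.1706 : ℝ) * 0.413 ≤ p * s := mul_le_mul h1 hs1 (by norm_num) (by linarith)
  have hps2 : p * s ≤ 0.1716 * 0.41425 := mul_le_mul h2 hs2 (by linarith) (by norm_num)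
  have hrL1 : (1.4142135 : ℝ) * 0.1870525 ≤ r * L :=
    mul_le_mul hr1 hL1 (by norm_num) (by linarith)
  have hrL2 : r * L ≤ 1.4142136 * 0.1882593 :=
    mul_le_mul hr2 hL2 (by linarith) (by norm_num)
  have hT2a : r * L / (2 * (p * s)) ≤ 1.8898 := by
    rw [div_le_iff₀ (by positivity)]
    nlinarith
  have hT2b : (1.8605 : ℝ) ≤ r * L / (2 * (p * s)) := by
    rw [le_div_iff₀ (by positivity)]
    nlinarith
  set T := r / ((1 - p) * s) - r * L / (2 * (p * s)) with hTdef
  have hTlo : (2.2258 : ℝ) ≤ T := by rw [hTdef]; linarith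
  have hThi : T ≤ 2.2731 := by rw [hTdef]; linarith
  -- middle term
  have hMid : (-1.8414 : ℝ) ≤ (4 * p - 2) / (1 - 2 * p * (1 - p)) := by
    rw [le_div_iff₀ hNpos]
    nlinarith
  -- w = 1 - log(1-p) * (r/s) = 1 + L * (r/s)
  have hw1 : (1.6385 : ℝ) ≤ 1 - Real.log (1 - p) * (r / s) := by
    have : (0.6385 : ℝ) ≤ L * (r / s) := by
      rw [← mul_div_assoc, le_div_iff₀ hsp]
      nlinarith
    have hLr : Real.log (1 - p) * (r / s) = -(L * (r / s)) := by rw [hLdef]; ring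
    rw [hLr]
    linarith
  have hwpos : (0 : ℝ) < 1 - Real.log (1 - p) * (r / s) := by linarith
  -- third term equals T / w - 1/(1-p)
  have hXeq := div_aux (T := T) hwpos.ne' hq.ne'
  have hXbound : T / (1 - Real.log (1 - p) * (r / s)) - 1 / (1 - p) ≤ 0.1818 := by
    have hdiv : T / (1 - Real.log (1 - p) * (r / s)) ≤ 2.2731 / 1.6385 := by
      apply div_le_div₀ (by norm_num) hThi (by norm_num) hw1
    have hinv : (1.2056 : ℝ) ≤ 1 / (1 - p) := by
      rw [le_div_iff₀ hq]
      nlinarith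
    nlinarith
  show 0 < T + (4 * p - 2) / (1 - 2 * p * (1 - p)) -
    (-1 * (1 - Real.log (1 - p) * (r / s)) + (1 - p) * T) /
      ((1 - p) * (1 - Real.log (1 - p) * (r / s)))
  rw [hXeq]
  linarith

lemma phi_a_neg : phiF 0.1706 < 0 := by
  have e1 : ((1 : ℝ) - 0.1706) = 0.8294 := by norm_num
  have e2 : ((1 : ℝ) - 2 * 0.1706 * 0.8294) = 0.71700872 := by norm_num
  unfold phiF
  rw [e1, e2]
  obtain ⟨hr1, hr2⟩ := sqrt2b
  obtain ⟨hs1, hs2⟩ := sqrta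
  have hspos : (0:ℝ) < Real.sqrt 0.1706 := by linarith
  have hL1 : (0.1870525 : ℝ) ≤ -Real.log 0.8294 := by linarith [lga.2]
  have hL2 : -Real.log 0.8294 ≤ 0.1870529 := by linarith [lga.1]
  have hLpos : (0:ℝ) < -Real.log 0.8294 := by linarith
  -- T = -log(0.8294) * (√2/√0.1706) ∈ [0.6404540, 0.6404576]
  have hT2 : -Real.log 0.8294 * (Real.sqrt 2 / Real.sqrt 0.1706) ≤ 0.6404576 := by
    rw [← mul_div_assoc, div_le_iff₀ hspos]
    nlinarith [mul_le_mul hL2 hr2 (by linarith) (by norm_num)]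
  have hT1 : (0.6404540 : ℝ) ≤ -Real.log 0.8294 * (Real.sqrt 2 / Real.sqrt 0.1706) := by
    rw [← mul_div_assoc, le_div_iff₀ hspos]
    nlinarith [mul_le_mul hL1 hr1 (by norm_num) (by linarith)]
  have hw : (1 : ℝ) - Real.log 0.8294 * (Real.sqrt 2 / Real.sqrt 0.1706)
      = 1 + -Real.log 0.8294 * (Real.sqrt 2 / Real.sqrt 0.1706) := by ring
  have hwpos : (0 : ℝ) < 1 - Real.log 0.8294 * (Real.sqrt 2 / Real.sqrt 0.1706) := by
    rw [hw]; linarith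
  rw [Real.log_mul (by norm_num) hwpos.ne']
  -- log(1 + T) ≥ log(1.6404540) = log 2 + log 0.820227
  have hlog2 : Real.log 1.6404540 = Real.log 2 + Real.log 0.820227 := by
    rw [← Real.log_mul (by norm_num) (by norm_num)]
    norm_num
  have hmono : Real.log 1.6404540 ≤
      Real.log (1 - Real.log 0.8294 * (Real.sqrt 2 / Real.sqrt 0.1706)) := by
    apply (Real.log_le_log_iff (by norm_num) hwpos).2
    rw [hw]; linarith
  have h2lb := Real.log_two_gt_d9
  linarith [lgNa.2, lgxa, lga.1, lga.2]

lemma phi_b_pos : 0 < phiF 0.1716 := by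
  have e1 : ((1 : ℝ) - 0.1716) = 0.8284 := by norm_num
  have e2 : ((1 : ℝ) - 2 * 0.1716 * 0.8284) = 0.71569312 := by norm_num
  unfold phiF
  rw [e1, e2]
  obtain ⟨hr1, hr2⟩ := sqrt2b
  obtain ⟨hs1, hs2⟩ := sqrtb
  have hspos : (0:ℝ) < Real.sqrt 0.1716 := by linarith
  have hL1 : (0.1882589 : ℝ) ≤ -Real.log 0.8284 := by linarith [lgb.2]
  have hL2 : -Real.log 0.8284 ≤ 0.1882593 := by linarith [lgb.1]
  have hLpos : (0:ℝ) < -Real.log 0.8284 := by linarith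
  have hT2 : -Real.log 0.8284 * (Real.sqrt 2 / Real.sqrt 0.1716) ≤ 0.6427075 := by
    rw [← mul_div_assoc, div_le_iff₀ hspos]
    nlinarith [mul_le_mul hL2 hr2 (by linarith) (by norm_num)]
  have hT1 : (0.6427035 : ℝ) ≤ -Real.log 0.8284 * (Real.sqrt 2 / Real.sqrt 0.1716) := by
    rw [← mul_div_assoc, le_div_iff₀ hspos]
    nlinarith [mul_le_mul hL1 hr1 (by norm_num) (by linarith)]
  have hw : (1 : ℝ) - Real.log 0.8284 * (Real.sqrt 2 / Real.sqrt 0.1716)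
      = 1 + -Real.log 0.8284 * (Real.sqrt 2 / Real.sqrt 0.1716) := by ring
  have hwpos : (0 : ℝ) < 1 - Real.log 0.8284 * (Real.sqrt 2 / Real.sqrt 0.1716) := by
    rw [hw]; linarith
  rw [Real.log_mul (by norm_num) hwpos.ne']
  have hlog2 : Real.log 1.6427075 = Real.log 2 + Real.log 0.82135375 := by
    rw [← Real.log_mul (by norm_num) (by norm_num)]
    norm_num
  have hmono : Real.log (1 - Real.log 0.8284 * (Real.sqrt 2 / Real.sqrt 0.1716))
      ≤ Real.log 1.6427075 := by
    apply (Real.log_le_log_iff hwpos (by norm_num)).2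
    rw [hw]; linarith
  have h2ub := Real.log_two_lt_d9
  linarith [lgNb.1, lgxb, lgb.1, lgb.2]

lemma phi_equiv {p : ℝ} (h1 : 0.17 < p) (h2 : p < 0.172) :
    ((1 / (1 - p)) * ((1 - 2 * p * (1 - p)) /
        ((1 - p) * (1 - Real.log (1 - p) * Real.sqrt (2 / p))))
        ^ (Real.sqrt (p / 2)) - 1 = 0 ↔ phiF p = 0) := by
  have hp : 0 < p := by linarith
  have hq : 0 < 1 - p := by linarith
  have hlneg : Real.log (1 - p) < 0 := Real.log_neg (by linarith) (by linarith)
  have hsp : 0 < Real.sqrt p := Real.sqrt_pos.2 hp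
  have hs2 : 0 < Real.sqrt 2 := Real.sqrt_pos.2 (by norm_num)
  have hvpos : 0 < Real.sqrt 2 / Real.sqrt p := by positivity
  have hw : 0 < 1 - Real.log (1 - p) * (Real.sqrt 2 / Real.sqrt p) := by
    have := mul_pos (neg_pos.2 hlneg) hvpos
    nlinarith
  have hN : (0:ℝ) < 1 - 2 * p * (1 - p) := by nlinarith
  have hsqq : Real.sqrt (2 / p) = Real.sqrt 2 / Real.sqrt p := Real.sqrt_div (by norm_num) p
  have hsp2 : Real.sqrt (p / 2) = Real.sqrt p / Real.sqrt 2 := Real.sqrt_div hp.le 2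
  rw [hsqq, hsp2]
  have hD : 0 < (1 - p) * (1 - Real.log (1 - p) * (Real.sqrt 2 / Real.sqrt p)) :=
    mul_pos hq hw
  have hA : 0 < (1 - 2 * p * (1 - p)) /
      ((1 - p) * (1 - Real.log (1 - p) * (Real.sqrt 2 / Real.sqrt p))) := div_pos hN hD
  rw [Real.rpow_def_of_pos hA]
  have h1q : (1:ℝ) / (1 - p) = Real.exp (-Real.log (1 - p)) := by
    rw [Real.exp_neg, Real.exp_log hq, one_div]
  rw [h1q, ← Real.exp_add, sub_eq_zero, Real.exp_eq_one_iff]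
  rw [Real.log_div hN.ne' hD.ne']
  constructor
  · intro h
    have hid : phiF p = (Real.sqrt 2 / Real.sqrt p) *
        (-Real.log (1 - p) + (Real.log (1 - 2 * p * (1 - p)) -
          Real.log ((1 - p) * (1 - Real.log (1 - p) * (Real.sqrt 2 / Real.sqrt p)))) *
            (Real.sqrt p / Real.sqrt 2)) := by
      unfold phiF
      field_simp
      ring
    rw [hid, h, mul_zero]
  · intro h
    have hid : -Real.log (1 - p) + (Real.log (1 - 2 * p * (1 - p)) -
          Real.log ((1 - p) * (1 - Real.log (1 - p) * (Real.sqrt 2 / Real.sqrt p)))) *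
            (Real.sqrt p / Real.sqrt 2) = (Real.sqrt p / Real.sqrt 2) * phiF p := by
      unfold phiF
      field_simp
      ring
    rw [hid, h, mul_zero]


theorem stmt_8 :
    ∀ g₀ : ℝ → ℝ,
      (∀ p, g₀ p = (1 / (1 - p)) * ((1 - 2 * p * (1 - p)) /
        ((1 - p) * (1 - Real.log (1 - p) * Real.sqrt (2 / p))))
        ^ (Real.sqrt (p / 2))) →
    ∃! pstar : ℝ, pstar ∈ Set.Ioo (0:ℝ) ((3 - Real.sqrt 5) / 2) ∧ g₀ pstar - 1 = 0 ∧
      |pstar - 0.1711| < 0.0005 := by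
  intro g₀ hg
  have key : ∀ p : ℝ, 0.17 < p → p < 0.172 → (g₀ p - 1 = 0 ↔ phiF p = 0) := by
    intro p h1 h2
    rw [hg p]
    exact phi_equiv h1 h2
  have hcont : ContinuousOn phiF (Icc 0.1706 0.1716) := fun p hp =>
    (hasDerivPhi (by simp only [mem_Icc] at hp; linarith [hp.1])
      (by simp only [mem_Icc] at hp; linarith [hp.2])).continuousAt.continuousWithinAt
  have hmono : StrictMonoOn phiF (Icc 0.1706 0.1716) := by
    apply strictMonoOn_of_deriv_pos (convex_Icc _ _) hcont
    intro x hx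
    rw [interior_Icc, mem_Ioo] at hx
    rw [(hasDerivPhi (by linarith [hx.1]) (by linarith [hx.2])).deriv]
    exact EF_pos (le_of_lt hx.1) (le_of_lt hx.2)
  obtain ⟨c, hc, hc0⟩ := intermediate_value_Ioo (by norm_num : (0.1706:ℝ) ≤ 0.1716)
    hcont (Set.mem_Ioo.2 ⟨phi_a_neg, phi_b_pos⟩)
  rw [mem_Ioo] at hc
  have hsqrt5 : Real.sqrt 5 < 2.6568 := by
    rw [show (2.6568:ℝ) = √(2.6568^2) from (Real.sqrt_sq (by norm_num)).symm]
    exact Real.sqrt_lt_sqrt (by norm_num) (by norm_num)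
  refine ⟨c, ⟨⟨by constructor <;> [linarith [hc.1]; linarith [hc.2]], ?_, ?_⟩, ?_⟩⟩
  · exact (key c (by linarith [hc.1]) (by linarith [hc.2])).2 hc0
  · rw [abs_lt]; constructor <;> [linarith [hc.1]; linarith [hc.2]]
  · rintro y ⟨hy1, hy2, hy3⟩
    rw [abs_lt] at hy3
    have hya : 0.1706 < y := by linarith [hy3.1]
    have hyb : y < 0.1716 := by linarith [hy3.2]
    have hphiy : phiF y = 0 := (key y (by linarith) (by linarith)).1 hy2
    exact hmono.injOn (Set.mem_Icc.2 ⟨hya.le, hyb.le⟩)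
      (Set.mem_Icc.2 ⟨hc.1.le, hc.2.le⟩) (by rw [hphiy, hc0])
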